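/- Let 1 ≤ q < p ≤ ∞ (so that 1/q − 1/p > 0), and suppose numbers γ_* > 0, k_* ∈ ℕ, λ_* ≤ μ_*, and a slowly varying absolutely continuous function ψ_* are given with ν̄_t = 2^{γ_* k_* t} ψ_*(2^{k_* t}). Suppose additionally that for all t' ≥ t, 2^{−μ_* k_* t'} u_*(2^{k_* t'}) ν̄_{t'}^{1/q − 1/p} ≤ c · 2^{−μ_* k_* t} u_*(2^{k_* t}) ν̄_t^{1/q − 1/p} where u_* is slowly varying. Then the doubly-exponential growth condition ν̄_t = 2^{γ_* 2^t} ψ_*(2^{2^t}) (with k_* = 1) is incompatible with this monotonicity: no choice of parameters satisfies both. -/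

import Mathlib

open Filter MeasureTheory intervalIntegral

lemma slowly_varying_doubling (f f' : ℝ → ℝ)
    (hpos : ∀ y : ℝ, 0 < y → 0 < f y)
    (hac : ∀ a b : ℝ, 0 < a → a ≤ b → f b - f a = ∫ y in a..b, f' y)
    (hlim : Tendsto (fun y => y * f' y / f y) atTop (nhds 0))
    (ε : ℝ) (hε : 0 < ε) (hε1 : ε < 1) :
    ∃ Y : ℝ, 1 ≤ Y ∧ ∀ y : ℝ, Y ≤ y → (1 - ε) * f y ≤ f (2 * y) := by
  have h2 : (0:ℝ) < ε / 2 := by linarith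
  have hev : ∀ᶠ y in atTop, |y * f' y / f y| < ε / 2 := by
    filter_upwards [Metric.tendsto_nhds.mp hlim (ε/2) h2] with w hw
    rwa [Real.dist_eq, sub_zero] at hw
  obtain ⟨Y₀, hY₀⟩ := hev.exists_forall_of_atTop
  refine ⟨max Y₀ 1, le_max_right _ _, fun y hy => ?_⟩
  have hy1 : (1:ℝ) ≤ y := le_trans (le_max_right _ _) hy
  have hy0 : (0:ℝ) < y := lt_of_lt_of_le one_pos hy1
  have hbound : ∀ w : ℝ, y ≤ w → |f' w| ≤ ε / 2 * (f w / w) := by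
    intro w hw
    have hw0 : (0:ℝ) < w := lt_of_lt_of_le hy0 hw
    have hfw : (0:ℝ) < f w := hpos w hw0
    have h := le_of_lt (hY₀ w (le_trans (le_trans (le_max_left _ _) hy) hw))
    have : |w * f' w / f w| * (f w / w) ≤ ε / 2 * (f w / w) := by
      apply mul_le_mul_of_nonneg_right h (by positivity)
    calc |f' w| = |w * f' w / f w| * (f w / w) := by
          rw [abs_div, abs_mul, abs_of_pos hfw, abs_of_pos hw0]
          field_simp
      _ ≤ ε / 2 * (f w / w) := this
  have hy2 : y ≤ 2 * y := by linarith
  by_cases hint : IntervalIntegrable f' volume y (2 * y)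
  · -- continuous on [y, 2y]
    have hfeq : ∀ x ∈ Set.Icc y (2*y), f x = f y + ∫ s in y..x, f' s := by
      intro x hx
      have := hac y x hy0 hx.1
      linarith
    have hcont : ContinuousOn f (Set.Icc y (2*y)) := by
      have hun : Set.uIcc y (2*y) = Set.Icc y (2*y) := Set.uIcc_of_le hy2
      have := (continuousOn_primitive_interval' hint (by rw [hun]; exact Set.left_mem_Icc.mpr hy2))
      rw [hun] at this
      exact (continuousOn_const.add this).congr hfeq
    obtain ⟨ξ, hξmem, hξmax⟩ := isCompact_Icc.exists_isMaxOn (Set.nonempty_Icc.mpr hy2) hcont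
    set M := f ξ with hM
    have hMpos : 0 < M := hpos ξ (lt_of_lt_of_le hy0 hξmem.1)
    have hMy : f y ≤ M := hξmax (Set.left_mem_Icc.mpr hy2)
    have hξ2y : ξ ≤ 2 * y := hξmem.2
    have hξ0 : 0 < ξ := lt_of_lt_of_le hy0 hξmem.1
    have hint2 : IntervalIntegrable f' volume ξ (2 * y) := by
      apply hint.mono_set
      rw [Set.uIcc_of_le hξ2y, Set.uIcc_of_le hy2]
      exact Set.Icc_subset_Icc hξmem.1 le_rfl
    have hstep : -(ε / 2 * (M / y)) * (2 * y - ξ) ≤ f (2*y) - f ξ := by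
      rw [hac ξ (2*y) hξ0 hξ2y]
      have hconst : IntervalIntegrable (fun _ : ℝ => -(ε / 2 * (M / y))) volume ξ (2*y) :=
        intervalIntegrable_const
      have hmono := integral_mono_on hξ2y hconst hint2 (fun x hx => ?_)
      · calc -(ε / 2 * (M / y)) * (2 * y - ξ)
            = ∫ _ in ξ..(2*y), -(ε / 2 * (M / y)) := by
              rw [intervalIntegral.integral_const, smul_eq_mul]; ring
          _ ≤ ∫ s in ξ..(2*y), f' s := hmono
      · -- pointwise bound
        have hxy : y ≤ x := le_trans hξmem.1 hx.1
        have hfx : f x ≤ M := hξmax (Set.mem_Icc.mpr ⟨hxy, hx.2⟩)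
        have hb := hbound x hxy
        have : ε / 2 * (f x / x) ≤ ε / 2 * (M / y) := by
          apply mul_le_mul_of_nonneg_left _ (le_of_lt h2)
          apply div_le_div₀ hMpos.le hfx hy0 hxy
        nlinarith [neg_abs_le (f' x), abs_nonneg (f' x)]
    have hlen : 2 * y - ξ ≤ y := by linarith [hξmem.1]
    have : M * (1 - ε/2) ≤ f (2*y) := by
      have h1 : ε / 2 * (M / y) * (2 * y - ξ) ≤ ε / 2 * (M / y) * y := by
        apply mul_le_mul_of_nonneg_left hlen (by positivity)
      have h2' : ε / 2 * (M / y) * y = ε / 2 * M := by field_simp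
      nlinarith
    calc (1 - ε) * f y ≤ (1 - ε/2) * f y := by nlinarith [hpos y hy0]
      _ ≤ (1 - ε/2) * M := by nlinarith
      _ ≤ f (2*y) := by nlinarith
  · have := hac y (2*y) hy0 hy2
    rw [intervalIntegral.integral_undef hint] at this
    have hfy : 0 < f y := hpos y hy0
    nlinarith


lemma iter_doubling (f : ℝ → ℝ) (Y ε : ℝ) (hε : 0 ≤ 1 - ε)
    (hd : ∀ y : ℝ, Y ≤ y → (1 - ε) * f y ≤ f (2 * y)) :
    ∀ y : ℝ, Y ≤ y → 0 ≤ y → ∀ n : ℕ, (1 - ε) ^ n * f y ≤ f (2 ^ n * y) := by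
  intro y hy hy0 n
  induction n with
  | zero => simp
  | succ n ih =>
    have h1 : (1:ℝ) ≤ 2 ^ n := one_le_pow₀ (by norm_num)
    have h2 : Y ≤ 2 ^ n * y := le_trans hy (le_mul_of_one_le_left hy0 h1)
    calc (1 - ε) ^ (n+1) * f y = (1 - ε) * ((1 - ε) ^ n * f y) := by ring
      _ ≤ (1 - ε) * f (2 ^ n * y) := mul_le_mul_of_nonneg_left ih hε
      _ ≤ f (2 * (2 ^ n * y)) := hd _ h2
      _ = f (2 ^ (n+1) * y) := by ring_nf

lemma nat_sq_le_two_pow : ∀ n : ℕ, 4 ≤ n → n ^ 2 ≤ 2 ^ n := by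
  intro n hn
  induction n with
  | zero => omega
  | succ n ih =>
    rcases Nat.lt_or_ge n 4 with h | h
    · have hn3 : n = 3 := by omega
      subst hn3; norm_num
    · have := ih (by omega)
      have h2 : (n+1)^2 ≤ 2 * n^2 := by nlinarith
      calc (n+1)^2 ≤ 2 * n^2 := h2
        _ ≤ 2 * 2^n := by omega
        _ = 2^(n+1) := by ring




open scoped ENNReal
set_option maxHeartbeats 1000000 in

theorem doubly_exponential_incompatible
    (p : ℝ≥0∞) (q : ℝ) (hq : 1 ≤ q) (hqp : ENNReal.ofReal q < p)
    (γs : ℝ) (hγ : 0 < γs) (ks : ℕ) (hks : ks = 1)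
    (lams mus : ℝ) (hlam : 0 ≤ lams) (hlm : lams ≤ mus)
    (u u' ψ ψ' : ℝ → ℝ)
    (hupos : ∀ y : ℝ, 0 < y → 0 < u y)
    (huac : ∀ a b : ℝ, 0 < a → a ≤ b → u b - u a = ∫ y in a..b, u' y)
    (hulim : Tendsto (fun y => y * u' y / u y) atTop (nhds 0))
    (hψpos : ∀ y : ℝ, 0 < y → 0 < ψ y)
    (hψac : ∀ a b : ℝ, 0 < a → a ≤ b → ψ b - ψ a = ∫ y in a..b, ψ' y)
    (hψlim : Tendsto (fun y => y * ψ' y / ψ y) atTop (nhds 0))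
    (ν : ℕ → ℝ)
    (hν : ∀ t : ℕ, ν t = (2 : ℝ) ^ (γs * (2 : ℝ) ^ (t : ℕ)) * ψ ((2 : ℝ) ^ ((2 : ℕ) ^ t)))
    (c : ℝ) (hc : 0 < c)
    (hmono : ∀ t t' : ℕ, t ≤ t' →
      (2 : ℝ) ^ (-(mus * (ks : ℝ) * (t' : ℝ))) * u ((2 : ℝ) ^ ((ks : ℝ) * (t' : ℝ))) *
          ν t' ^ (q⁻¹ - (p⁻¹).toReal) ≤
        c * ((2 : ℝ) ^ (-(mus * (ks : ℝ) * (t : ℝ))) * u ((2 : ℝ) ^ ((ks : ℝ) * (t : ℝ))) *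
          ν t ^ (q⁻¹ - (p⁻¹).toReal))) :
    False := by
  subst hks
  have hq0 : (0:ℝ) < q := lt_of_lt_of_le one_pos hq
  set α : ℝ := q⁻¹ - (p⁻¹).toReal with hαdef
  have hmus : 0 ≤ mus := le_trans hlam hlm
  -- α > 0
  have hα : 0 < α := by
    have hp0 : (0:ℝ≥0∞) < p := lt_of_le_of_lt zero_le hqp
    rcases eq_or_ne p ⊤ with hp | hp
    · simp [hαdef, hp]
      positivity
    · have h1 : p⁻¹ < (ENNReal.ofReal q)⁻¹ := ENNReal.inv_lt_inv.mpr hqp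
      rw [← ENNReal.ofReal_inv_of_pos hq0] at h1
      have h2 := (ENNReal.toReal_lt_toReal (by simp [ENNReal.inv_ne_top, hp0.ne'])
        ENNReal.ofReal_ne_top).mpr h1
      rw [ENNReal.toReal_ofReal (by positivity)] at h2
      simp only [hαdef]
      linarith
  -- slow-variation doubling bounds
  obtain ⟨Yu, hYu1, hYu⟩ := slowly_varying_doubling u u' hupos huac hulim (1/2)
    (by norm_num) (by norm_num)
  set εψ : ℝ := 1 - (2:ℝ) ^ (-(γs/2)) with hεψdef
  have hρpos : (0:ℝ) < (2:ℝ) ^ (-(γs/2)) := Real.rpow_pos_of_pos two_pos _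
  have hρlt : (2:ℝ) ^ (-(γs/2)) < 1 :=
    Real.rpow_lt_one_of_one_lt_of_neg one_lt_two (by linarith)
  have hεψ0 : 0 < εψ := by simp only [hεψdef]; linarith
  have hεψ1 : εψ < 1 := by simp only [hεψdef]; linarith
  obtain ⟨Yψ, hYψ1, hYψ⟩ := slowly_varying_doubling ψ ψ' hψpos hψac hψlim εψ hεψ0 hεψ1
  have hsubψ : (1:ℝ) - εψ = (2:ℝ) ^ (-(γs/2)) := by simp [hεψdef]
  -- choose base T
  obtain ⟨T, hT⟩ := exists_nat_ge (max Yu Yψ)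
  have hTu : Yu ≤ (T:ℝ) := le_trans (le_max_left _ _) hT
  have hTψ : Yψ ≤ (T:ℝ) := le_trans (le_max_right _ _) hT
  have hcast2T : ((2:ℕ)^T : ℝ) = (2:ℝ)^(T:ℕ) := by push_cast; ring
  have hT2 : (T:ℝ) ≤ (2:ℝ)^((T:ℝ)) := by
    rw [Real.rpow_natCast]
    exact_mod_cast (Nat.lt_two_pow_self (n := T)).le
  have hbaseu : Yu ≤ (2:ℝ)^((T:ℝ)) := le_trans hTu hT2
  have hbaseψ : Yψ ≤ (2:ℝ)^((2:ℕ)^T) := by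
    have e1 : (T:ℝ) ≤ ((2^T : ℕ) : ℝ) := by exact_mod_cast (Nat.lt_two_pow_self (n := T)).le
    have e2 : ((2^T : ℕ) : ℝ) ≤ (((2:ℕ)^((2:ℕ)^T) : ℕ) : ℝ) := by
      exact_mod_cast (Nat.lt_two_pow_self (n := 2^T)).le
    have e3 : (((2:ℕ)^((2:ℕ)^T) : ℕ) : ℝ) = (2:ℝ)^((2:ℕ)^T) := by push_cast; ring
    calc Yψ ≤ (T:ℝ) := hTψ
      _ ≤ ((2^T : ℕ) : ℝ) := e1
      _ ≤ (((2:ℕ)^((2:ℕ)^T) : ℕ) : ℝ) := e2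
      _ = (2:ℝ)^((2:ℕ)^T) := e3
  set uT : ℝ := u ((2:ℝ)^((T:ℝ))) with huTdef
  set ψT : ℝ := ψ ((2:ℝ)^((2:ℕ)^T)) with hψTdef
  have huT : 0 < uT := hupos _ (Real.rpow_pos_of_pos two_pos _)
  have hψT : 0 < ψT := hψpos _ (by positivity)
  have hνpos : ∀ t : ℕ, 0 < ν t := by
    intro t
    rw [hν t]
    have := hψpos ((2:ℝ)^((2:ℕ)^t)) (by positivity)
    positivity
  set c1 : ℝ := α * (γs/2) with hc1def
  have hc1 : 0 < c1 := by positivity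
  set c2 : ℝ := mus + 1 with hc2def
  set D : ℝ := c * ((2:ℝ)^(-(mus * (T:ℝ))) * uT * ν T ^ α) with hDdef
  have hD : 0 < D := by
    have h1 : (0:ℝ) < (2:ℝ)^(-(mus * (T:ℝ))) := Real.rpow_pos_of_pos two_pos _
    have h2 : (0:ℝ) < ν T ^ α := Real.rpow_pos_of_pos (hνpos T) _
    positivity
  set K0 : ℝ := uT * ψT ^ α with hK0def
  have hK0 : 0 < K0 := by positivity
  -- the key bound
  have key : ∀ n : ℕ, T ≤ n → K0 * (2:ℝ)^(c1 * (2:ℝ)^(n:ℕ) - c2 * (n:ℝ)) ≤ D := by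
    intro n hn
    have hm := hmono T n hn
    simp only [Nat.cast_one, one_mul, mul_one] at hm
    -- (a) lower bound for u(2^n)
    have ha : uT * (2:ℝ)^(-(n:ℝ)) ≤ u ((2:ℝ)^((n:ℝ))) := by
      have h1 := iter_doubling u Yu (1/2) (by norm_num) hYu ((2:ℝ)^((T:ℝ))) hbaseu
        (by positivity) (n - T)
      have harg : (2:ℝ)^((n-T:ℕ)) * (2:ℝ)^((T:ℝ)) = (2:ℝ)^((n:ℝ)) := by
        rw [← Real.rpow_natCast 2 (n-T), ← Real.rpow_add two_pos, Nat.cast_sub hn]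
        ring_nf
      have hcoef : ((1:ℝ) - 1/2)^((n-T:ℕ)) = (2:ℝ)^(-(((n-T:ℕ)):ℝ)) := by
        have e1 : ((1:ℝ) - 1/2) = (2:ℝ)^(-1:ℝ) := by
          rw [Real.rpow_neg_one]; norm_num
        rw [e1, ← Real.rpow_natCast ((2:ℝ)^(-1:ℝ)) (n-T), ← Real.rpow_mul two_pos.le]
        norm_num
      rw [harg, hcoef] at h1
      refine le_trans ?_ h1
      rw [mul_comm uT _]
      apply mul_le_mul_of_nonneg_right _ huT.le
      apply Real.rpow_le_rpow_of_exponent_le one_le_two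
      have : ((n-T:ℕ):ℝ) ≤ (n:ℝ) := by exact_mod_cast Nat.sub_le n T
      linarith
    -- (b) lower bound for ψ(2^(2^n))
    have hb : ψT * (2:ℝ)^(-(γs/2) * (2:ℝ)^(n:ℕ)) ≤ ψ ((2:ℝ)^((2:ℕ)^n)) := by
      have h1 := iter_doubling ψ Yψ εψ (by linarith) hYψ ((2:ℝ)^((2:ℕ)^T)) hbaseψ
        (by positivity) (2^n - 2^T)
      have hexp : (2:ℕ)^n - (2:ℕ)^T + (2:ℕ)^T = (2:ℕ)^n :=
        Nat.sub_add_cancel (Nat.pow_le_pow_right (by norm_num) hn)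
      have harg : (2:ℝ)^((2:ℕ)^n - (2:ℕ)^T) * (2:ℝ)^((2:ℕ)^T) = (2:ℝ)^((2:ℕ)^n) := by
        rw [← pow_add, hexp]
      rw [harg, hsubψ] at h1
      refine le_trans ?_ h1
      rw [mul_comm ψT _]
      apply mul_le_mul_of_nonneg_right _ hψT.le
      have hcoef : ((2:ℝ)^(-(γs/2)))^((2:ℕ)^n - (2:ℕ)^T) =
          (2:ℝ)^(-(γs/2) * (((2:ℕ)^n - (2:ℕ)^T : ℕ):ℝ)) := by
        rw [← Real.rpow_natCast ((2:ℝ)^(-(γs/2))) _, ← Real.rpow_mul two_pos.le]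
      rw [hcoef]
      apply Real.rpow_le_rpow_of_exponent_le one_le_two
      have h2 : (((2:ℕ)^n - (2:ℕ)^T : ℕ):ℝ) ≤ (2:ℝ)^(n:ℕ) := by
        calc (((2:ℕ)^n - (2:ℕ)^T : ℕ):ℝ) ≤ (((2:ℕ)^n : ℕ):ℝ) := by
              exact_mod_cast Nat.sub_le _ _
          _ = (2:ℝ)^(n:ℕ) := by push_cast; ring
      nlinarith
    -- (c) lower bound for (ν n)^α
    have hνn : ψT * (2:ℝ)^((γs/2) * (2:ℝ)^(n:ℕ)) ≤ ν n := by
      rw [hν n]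
      have h2 : (2:ℝ)^(γs * (2:ℝ)^(n:ℕ)) * ((2:ℝ)^(-(γs/2) * (2:ℝ)^(n:ℕ))) =
          (2:ℝ)^((γs/2) * (2:ℝ)^(n:ℕ)) := by
        rw [← Real.rpow_add two_pos]; congr 1; ring
      calc ψT * (2:ℝ)^((γs/2) * (2:ℝ)^(n:ℕ))
          = (2:ℝ)^(γs * (2:ℝ)^(n:ℕ)) * (ψT * (2:ℝ)^(-(γs/2) * (2:ℝ)^(n:ℕ))) := by
            rw [show (2:ℝ)^(γs * (2:ℝ)^(n:ℕ)) * (ψT * (2:ℝ)^(-(γs/2) * (2:ℝ)^(n:ℕ)))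
              = ψT * ((2:ℝ)^(γs * (2:ℝ)^(n:ℕ)) * ((2:ℝ)^(-(γs/2) * (2:ℝ)^(n:ℕ)))) from by ring,
              h2]
        _ ≤ (2:ℝ)^(γs * (2:ℝ)^(n:ℕ)) * ψ ((2:ℝ)^((2:ℕ)^n)) := by
            apply mul_le_mul_of_nonneg_left hb (by positivity)
    have hcν : ψT ^ α * (2:ℝ)^((γs/2) * (2:ℝ)^(n:ℕ) * α) ≤ ν n ^ α := by
      have h1 : (ψT * (2:ℝ)^((γs/2) * (2:ℝ)^(n:ℕ))) ^ α ≤ ν n ^ α :=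
        Real.rpow_le_rpow (by positivity) hνn hα.le
      rw [Real.mul_rpow hψT.le (by positivity), ← Real.rpow_mul two_pos.le] at h1
      exact h1
    -- combine
    have hcomb : (2:ℝ)^(-(mus * (n:ℝ))) * (uT * (2:ℝ)^(-(n:ℝ))) *
        (ψT ^ α * (2:ℝ)^((γs/2) * (2:ℝ)^(n:ℕ) * α)) ≤
        (2:ℝ)^(-(mus * (n:ℝ))) * u ((2:ℝ)^((n:ℝ))) * ν n ^ α := by
      have hpow : (0:ℝ) < (2:ℝ)^(-(mus * (n:ℝ))) := Real.rpow_pos_of_pos two_pos _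
      apply mul_le_mul
      · exact mul_le_mul_of_nonneg_left ha hpow.le
      · exact hcν
      · positivity
      · have := hupos ((2:ℝ)^((n:ℝ))) (Real.rpow_pos_of_pos two_pos _)
        positivity
    have heq : (2:ℝ)^(-(mus * (n:ℝ))) * (uT * (2:ℝ)^(-(n:ℝ))) *
        (ψT ^ α * (2:ℝ)^((γs/2) * (2:ℝ)^(n:ℕ) * α)) =
        K0 * (2:ℝ)^(c1 * (2:ℝ)^(n:ℕ) - c2 * (n:ℝ)) := by
      rw [hK0def, hc1def, hc2def]
      rw [show c1 * (2:ℝ)^(n:ℕ) - c2 * (n:ℝ)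
        = -(mus * (n:ℝ)) + (-(n:ℝ) + (γs/2) * (2:ℝ)^(n:ℕ) * α) from by
          rw [hc1def, hc2def]; ring]
      rw [Real.rpow_add two_pos, Real.rpow_add two_pos]
      ring
    rw [heq] at hcomb
    exact le_trans hcomb hm
  -- choose n large
  set B : ℝ := Real.logb 2 (D / K0) with hBdef
  obtain ⟨n, hnT, hn4, hnN1, hnN2⟩ :
      ∃ n : ℕ, T ≤ n ∧ 4 ≤ n ∧ ⌈(c2+1)/c1⌉₊ ≤ n ∧ ⌈B⌉₊ + 1 ≤ n :=
    ⟨max (max T 4) (max (⌈(c2+1)/c1⌉₊) (⌈B⌉₊ + 1)), by omega, by omega, by omega, by omega⟩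
  have hsq : ((n:ℝ))^2 ≤ (2:ℝ)^(n:ℕ) := by
    have := nat_sq_le_two_pow n hn4
    calc ((n:ℝ))^2 = ((n^2 : ℕ) : ℝ) := by push_cast; ring
      _ ≤ (((2:ℕ)^n : ℕ) : ℝ) := by exact_mod_cast this
      _ = (2:ℝ)^(n:ℕ) := by push_cast; ring
  have hc1n : c2 + 1 ≤ c1 * (n:ℝ) := by
    have h1 : (c2+1)/c1 ≤ (⌈(c2+1)/c1⌉₊ : ℝ) := Nat.le_ceil _
    have h2 : ((⌈(c2+1)/c1⌉₊ : ℕ) : ℝ) ≤ (n:ℝ) := by exact_mod_cast hnN1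
    have h3 : (c2+1)/c1 ≤ (n:ℝ) := le_trans h1 h2
    rw [div_le_iff₀ hc1] at h3
    linarith
  have hBn : B < c1 * (2:ℝ)^(n:ℕ) - c2 * (n:ℝ) := by
    have h1 : B ≤ (⌈B⌉₊ : ℝ) := Nat.le_ceil _
    have h2 : ((⌈B⌉₊ + 1 : ℕ) : ℝ) ≤ (n:ℝ) := by exact_mod_cast hnN2
    have h3 : B + 1 ≤ (n:ℝ) := by push_cast at h2; linarith
    have h4 : c1 * ((n:ℝ))^2 ≤ c1 * (2:ℝ)^(n:ℕ) := mul_le_mul_of_nonneg_left hsq hc1.le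
    have h5 : (c2 + 1) * (n:ℝ) ≤ (c1 * (n:ℝ)) * (n:ℝ) :=
      mul_le_mul_of_nonneg_right hc1n (by positivity)
    have h6 : (c1 * (n:ℝ)) * (n:ℝ) = c1 * ((n:ℝ))^2 := by ring
    have h7 : (c2 + 1) * (n:ℝ) = c2 * (n:ℝ) + (n:ℝ) := by ring
    linarith
  have hfin := key n hnT
  have hB2 : (2:ℝ)^B = D / K0 := Real.rpow_logb two_pos (by norm_num) (div_pos hD hK0)
  have hlt : D < K0 * (2:ℝ)^(c1 * (2:ℝ)^(n:ℕ) - c2 * (n:ℝ)) := by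
    have h1 : (2:ℝ)^B < (2:ℝ)^(c1 * (2:ℝ)^(n:ℕ) - c2 * (n:ℝ)) :=
      (Real.rpow_lt_rpow_left_iff one_lt_two).mpr hBn
    rw [hB2] at h1
    calc D = K0 * (D / K0) := by field_simp
      _ < K0 * (2:ℝ)^(c1 * (2:ℝ)^(n:ℕ) - c2 * (n:ℝ)) := by
        exact mul_lt_mul_of_pos_left h1 hK0
  linarith
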